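/- Let d ≥ 2, define a_i ∈ ℤ[c] by a_0 = 0 and a_{i+1} = a_i^d + c. Let c₀ ∈ ℚ̄ be such that f(z) = z^d + c₀ is postcritically finite of exact type (m, n) with m ≥ 1 (i.e., f^{m+n}(0) = f^m(0), m is minimal nonnegative with f^m(0) periodic and m ≥ 1, and n is the exact period of f^m(0)). Let K = ℚ(c₀) and let v be a finite place of K. Then either v(a_i(c₀)) = 0 for all i ≥ 1, or v(a_n(c₀)) > 0 and, for all i ≥ 1, v(a_i(c₀)) = v(a_n(c₀)) if n divides i and v(a_i(c₀)) = 0 otherwise. -/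

import Mathlib

open NumberField IsDedekindDomain
open scoped Multiplicative

/-- If f(z) = z^d + c₀ is PCF of exact type (m,n) with m ≥ 1,
K = ℚ(c₀), and v is a finite place of K, then either v(a_i) = 0 for all i ≥ 1,
or v(a_n) > 0 and v(a_i) = v(a_n) when n ∣ i, v(a_i) = 0 otherwise.
(Valuations are written multiplicatively: v(x) = 0 ⟺ intValuation x = 1,
v(x) > 0 ⟺ intValuation x < 1.) -/
theorem stmt7 (d : ℕ) (hd : 2 ≤ d) (K : Type*) [Field K] [NumberField K]
    (c₀ : 𝓞 K) (hK : Algebra.adjoin ℚ {algebraMap (𝓞 K) K c₀} = ⊤)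
    (a : ℕ → 𝓞 K) (ha0 : a 0 = 0) (haS : ∀ i, a (i + 1) = a i ^ d + c₀)
    (m n : ℕ) (hm : 1 ≤ m) (hn : 1 ≤ n)
    (hper : a (m + n) = a m)
    (hnmin : ∀ k, 0 < k → k < n → a (m + k) ≠ a m)
    (hmmin : ∀ m', m' < m → ∀ k, 0 < k → a (m' + k) ≠ a m')
    (v : HeightOneSpectrum (𝓞 K)) :
    (∀ i, 1 ≤ i → v.intValuation (a i) = 1) ∨
    (v.intValuation (a n) < 1 ∧ ∀ i, 1 ≤ i →
      (n ∣ i → v.intValuation (a i) = v.intValuation (a n)) ∧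
      (¬ n ∣ i → v.intValuation (a i) = 1)) := by
  classical
  set w := v.intValuation with hw
  -- basic facts about the valuation
  have hle : ∀ x : 𝓞 K, w x ≤ 1 := by
    intro x
    rw [hw, HeightOneSpectrum.intValuation_apply]
    exact v.intValuation_le_one x
  have hmem : ∀ x : 𝓞 K, w x < 1 ↔ x ∈ v.asIdeal := by
    intro x
    rw [hw, HeightOneSpectrum.intValuation_lt_one_iff_dvd,
      Ideal.dvd_span_singleton]
  have hnz : ∀ x : 𝓞 K, x ≠ 0 → w x ≠ 0 := by
    intro x hx
    rw [hw, HeightOneSpectrum.intValuation_apply]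
    exact v.intValuation_ne_zero x hx
  have hmul_le : ∀ x y : 𝓞 K, w (x * y) ≤ w y := by
    intro x y
    rw [map_mul]
    calc w x * w y ≤ 1 * w y := mul_le_mul_left (hle x) (w y)
    _ = w y := one_mul _
  have hmul_lt : ∀ {x y : WithZero (Multiplicative ℤ)}, x ≠ 0 → y < 1 → x * y < x := by
    intro x y hx hy
    exact mul_lt_of_lt_one_right (zero_lt_iff.2 hx) hy
  -- key factorization lemma : one step of the iteration contracts differences
  have hfac : ∀ p q : ℕ, a (p + 1) - a (q + 1) =
      (∑ t ∈ Finset.range d, a p ^ t * a q ^ (d - 1 - t)) * (a p - a q) := by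
    intro p q
    rw [haS p, haS q, geom_sum₂_mul]
    ring
  have hgeom : ∀ p q : ℕ, w (a (p + 1) - a (q + 1)) ≤ w (a p - a q) := by
    intro p q
    rw [hfac p q]
    exact hmul_le _ _
  by_cases hC : ∃ i, 1 ≤ i ∧ w (a i) < 1
  swap
  · -- Case A : all valuations are trivial
    push_neg at hC
    exact Or.inl fun i hi => le_antisymm (hle _) (hC i hi)
  -- Case B
  right
  set s := Nat.find hC with hs_def
  obtain ⟨hs1, hslt⟩ : 1 ≤ s ∧ w (a s) < 1 := Nat.find_spec hC
  have hsmin : ∀ r, r < s → 1 ≤ r → ¬ w (a r) < 1 := by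
    intro r hr h1 hlt
    exact Nat.find_min hC hr ⟨h1, hlt⟩
  -- residues are periodic with period s
  have hB1 : ∀ i, w (a (i + s) - a i) < 1 := by
    intro i
    induction i with
    | zero => simpa [ha0] using hslt
    | succ i ih =>
      have h1 : i + 1 + s = (i + s) + 1 := by omega
      rw [h1]
      exact lt_of_le_of_lt (hgeom (i + s) i) ih
  have hBgen : ∀ j i, w (a (i + j * s) - a i) < 1 := by
    intro j
    induction j with
    | zero => intro i; simp
    | succ j ih =>
      intro i
      have h1 : a (i + (j + 1) * s) - a i =
          (a ((i + j * s) + s) - a (i + j * s)) + (a (i + j * s) - a i) := by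
        have h2 : i + (j + 1) * s = i + j * s + s := by ring
        rw [h2]; ring
      rw [h1]
      exact lt_of_le_of_lt (w.map_add _ _) (max_lt (hB1 (i + j * s)) (ih i))
  -- divisibility by s characterizes positive valuation
  have hCdvd : ∀ i, 1 ≤ i → s ∣ i → w (a i) < 1 := by
    intro i hi ⟨k, hk⟩
    have h1 : w (a (0 + k * s) - a 0) < 1 := hBgen k 0
    have h2 : (0 : ℕ) + k * s = i := by rw [hk, Nat.zero_add, Nat.mul_comm]
    rw [h2, ha0, sub_zero] at h1
    exact h1
  have hCndvd : ∀ i, ¬ s ∣ i → w (a i) = 1 := by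
    intro i hndvd
    have hr0 : i % s ≠ 0 := fun h => hndvd (Nat.dvd_of_mod_eq_zero h)
    have hrlt : i % s < s := Nat.mod_lt i (by omega)
    have hr1 : w (a (i % s)) = 1 :=
      le_antisymm (hle _) (not_lt.1 (hsmin _ hrlt (by omega)))
    have h1 : a i = (a (i % s + i / s * s) - a (i % s)) + a (i % s) := by
      rw [Nat.mod_add_div']; ring
    have h2 : w (a (i % s + i / s * s) - a (i % s)) < w (a (i % s)) := by
      rw [hr1]; exact hBgen (i / s) (i % s)
    rw [h1, w.map_add_of_distinct_val (ne_of_lt h2), max_eq_right h2.le]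
    exact hr1
  -- exact periodicity of the cycle
  have hPer1 : ∀ j, a (m + j + n) = a (m + j) := by
    intro j
    induction j with
    | zero => simpa using hper
    | succ j ih =>
      have h1 : m + (j + 1) + n = (m + j + n) + 1 := by omega
      rw [h1, haS, ih, ← haS]
      rfl
  have hPerk : ∀ j k, a (m + j + k * n) = a (m + j) := by
    intro j k
    induction k with
    | zero => simp
    | succ k ih =>
      have h1 : m + j + (k + 1) * n = (m + (j + k * n)) + n := by ring
      have h2 : m + (j + k * n) = m + j + k * n := by ring
      rw [h1, hPer1 (j + k * n), h2, ih]
  -- s divides n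
  have hsn : s ∣ n := by
    have hsm : m ≤ s * m := Nat.le_mul_of_pos_left m (by omega)
    have h1 : w (a (s * m + n)) < 1 := by
      have h2 : a (s * m + n) = a (s * m) := by
        have h3 : s * m + n = m + (s * m - m) + n := by omega
        have h4 : s * m = m + (s * m - m) := by omega
        rw [h3, hPer1 (s * m - m), ← h4]
      rw [h2]
      exact hCdvd (s * m) (by omega) ⟨m, rfl⟩
    have h5 : s ∣ s * m + n := by
      by_contra h6
      rw [hCndvd _ h6] at h1
      exact lt_irrefl 1 h1
    have h7 : s ∣ s * m := ⟨m, rfl⟩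
    have := (Nat.dvd_sub h5 h7)
    simpa using this
  have hslen : s ≤ n := Nat.le_of_dvd (by omega) hsn
  -- s = n
  have hseq : s = n := by
    by_contra hne
    have hlt : s < n := lt_of_le_of_ne hslen hne
    -- no point of the cycle (or tail) admits period s
    have hE1 : ∀ j, a (m + j + s) ≠ a (m + j) := by
      intro j heq
      have hk : ∀ k, a (m + j + k + s) = a (m + j + k) := by
        intro k
        induction k with
        | zero => simpa using heq
        | succ k ih =>
          have h1 : m + j + (k + 1) + s = (m + j + k + s) + 1 := by omega
          have h2 : m + j + (k + 1) = (m + j + k) + 1 := by omega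
          rw [h1, h2, haS, haS, ih]
      have hjle : j ≤ j * n := Nat.le_mul_of_pos_right j (by omega)
      have h3 := hk (j * n - j)
      have h4 : m + j + (j * n - j) + s = m + s + j * n := by omega
      have h5 : m + j + (j * n - j) = m + 0 + j * n := by omega
      rw [h4, h5, hPerk s j, hPerk 0 j] at h3
      simp only [Nat.add_zero] at h3
      exact hnmin s (by omega) hlt h3
    -- the sequence of differences δ j = a (m+j+s) - a (m+j)
    set δ : ℕ → 𝓞 K := fun j => a (m + j + s) - a (m + j) with hδ
    have hδ0 : ∀ j, δ j ≠ 0 := fun j => sub_ne_zero.2 (hE1 j)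
    have hδper : δ n = δ 0 := by
      show a (m + n + s) - a (m + n) = a (m + 0 + s) - a (m + 0)
      have h1 : m + n + s = (m + s) + n := by omega
      have h2 : (m + s) + n = m + s + n := rfl
      rw [h1, hPer1 s, hper]
      simp
    have hδstep : ∀ j, w (δ (j + 1)) ≤ w (δ j) := by
      intro j
      show w (a (m + (j + 1) + s) - a (m + (j + 1))) ≤ _
      have h1 : m + (j + 1) + s = (m + j + s) + 1 := by omega
      have h2 : m + (j + 1) = (m + j) + 1 := by omega
      rw [h1, h2]
      exact hgeom (m + j + s) (m + j)
    have hchain : ∀ j k, w (δ (j + k)) ≤ w (δ j) := by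
      intro j k
      induction k with
      | zero => simp
      | succ k ih => exact le_trans (hδstep (j + k)) ih
    -- pick j₀ < n with s ∣ m + j₀
    obtain ⟨j₀, hj₀lt, hj₀dvd⟩ : ∃ j₀, j₀ < n ∧ s ∣ m + j₀ := by
      by_cases hr : m % s = 0
      · exact ⟨0, by omega, by simpa using Nat.dvd_of_mod_eq_zero hr⟩
      · refine ⟨s - m % s, by omega, ?_⟩
        have h1 : m % s + m / s * s = m := Nat.mod_add_div' m s
        have h2 : m % s < s := Nat.mod_lt m (by omega)
        have h3 : m + (s - m % s) = m / s * s + s := by omega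
        rw [h3]
        exact dvd_add (dvd_mul_left s (m / s)) dvd_rfl
    have hx : a (m + j₀ + s) ∈ v.asIdeal :=
      (hmem _).1 (hCdvd _ (by omega) (by exact Dvd.dvd.add hj₀dvd dvd_rfl))
    have hy : a (m + j₀) ∈ v.asIdeal := (hmem _).1 (hCdvd _ (by omega) hj₀dvd)
    have hT : (∑ t ∈ Finset.range d, a (m + j₀ + s) ^ t * a (m + j₀) ^ (d - 1 - t)) ∈
        v.asIdeal := by
      refine Ideal.sum_mem _ fun t ht => ?_
      rcases Nat.eq_zero_or_pos t with h | h
      · subst h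
        exact Ideal.mul_mem_left _ _ (Ideal.pow_mem_of_mem _ hy _ (by omega))
      · exact Ideal.mul_mem_right _ _ (Ideal.pow_mem_of_mem _ hx _ h)
    have hTlt : w (∑ t ∈ Finset.range d, a (m + j₀ + s) ^ t * a (m + j₀) ^ (d - 1 - t)) < 1 :=
      (hmem _).2 hT
    have hstrict : w (δ (j₀ + 1)) < w (δ j₀) := by
      have h1 : δ (j₀ + 1) =
          (∑ t ∈ Finset.range d, a (m + j₀ + s) ^ t * a (m + j₀) ^ (d - 1 - t)) * δ j₀ := by
        show a (m + (j₀ + 1) + s) - a (m + (j₀ + 1)) = _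
        have h2 : m + (j₀ + 1) + s = (m + j₀ + s) + 1 := by omega
        have h3 : m + (j₀ + 1) = (m + j₀) + 1 := by omega
        rw [h2, h3]
        exact hfac (m + j₀ + s) (m + j₀)
      rw [h1, map_mul, mul_comm]
      exact hmul_lt (hnz _ (hδ0 j₀)) hTlt
    -- contradiction
    have h4 : w (δ n) ≤ w (δ (j₀ + 1)) := by
      have h5 := hchain (j₀ + 1) (n - (j₀ + 1))
      have h6 : (j₀ + 1) + (n - (j₀ + 1)) = n := by omega
      rwa [h6] at h5
    have h7 : w (δ j₀) ≤ w (δ 0) := by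
      have h8 := hchain 0 j₀
      simpa using h8
    rw [hδper] at h4
    exact absurd (lt_of_le_of_lt h4 (lt_of_lt_of_le hstrict h7)) (lt_irrefl _)
  -- now s = n; conclude
  subst hseq
  have han0 : a s ≠ 0 := by
    have := hmmin 0 (by omega) s (by omega)
    simpa [ha0] using this
  have he0 : w (a s) ≠ 0 := hnz _ han0
  have hee : w (a s) * w (a s) < w (a s) := hmul_lt he0 hslt
  -- differences across one period are strongly contracted
  have hH : ∀ i, 1 ≤ i → w (a (i + s) - a i) ≤ w (a s) * w (a s) := by
    intro i hi
    induction i, hi using Nat.le_induction with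
    | base =>
      have h1 : a (1 + s) - a 1 = a s ^ d := by
        have h2 : (1 : ℕ) + s = s + 1 := by omega
        rw [h2, haS s, haS 0, ha0]
        have h3 : (0 : 𝓞 K) ^ d = 0 := zero_pow (by omega)
        rw [h3]
        ring
      rw [h1, map_pow]
      have h4 : d = 2 + (d - 2) := by omega
      rw [h4, pow_add, pow_two]
      calc w (a s) * w (a s) * w (a s) ^ (d - 2)
          ≤ w (a s) * w (a s) * 1 := mul_le_mul_right (pow_le_one' (hle _) _) _
        _ = w (a s) * w (a s) := mul_one _
    | succ i hi ih =>
      have h1 : i + 1 + s = (i + s) + 1 := by omega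
      rw [h1]
      exact le_trans (hgeom (i + s) i) ih
  -- exact valuation at multiples of s
  have hF : ∀ k, 1 ≤ k → w (a (k * s)) = w (a s) := by
    intro k hk
    induction k, hk using Nat.le_induction with
    | base => simp
    | succ k hk ih =>
      have hks1 : 1 ≤ k * s := Nat.one_le_iff_ne_zero.2 (Nat.mul_ne_zero (by omega) (by omega))
      have hdiff : w (a (k * s + s) - a (k * s)) < w (a (k * s)) := by
        rw [ih]
        exact lt_of_le_of_lt (hH (k * s) hks1) hee
      have h1 : a ((k + 1) * s) = (a (k * s + s) - a (k * s)) + a (k * s) := by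
        have h2 : (k + 1) * s = k * s + s := by ring
        rw [h2]; ring
      rw [h1, w.map_add_of_distinct_val (ne_of_lt hdiff), max_eq_right hdiff.le]
      exact ih
  refine ⟨hslt, fun i hi => ⟨fun hdvd => ?_, fun hndvd => hCndvd i hndvd⟩⟩
  obtain ⟨k, rfl⟩ := hdvd
  have hk1 : 1 ≤ k := by
    rcases Nat.eq_zero_or_pos k with h | h
    · subst h; simp at hi
    · exact h
  rw [mul_comm] at hi ⊢
  exact hF k hk1
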